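/- For every positive integer n, y(n) ≠ 0, i.e., 2^{2n − 2z(n) − m(n) + 2} ≠ n^{m(n)−1}. -/
import Mathlib

lemma pow9 : ∀ j : ℕ, 10 ≤ j → 9 * j ^ 2 ≤ 2 ^ j := by
  intro j hj
  induction j, hj using Nat.le_induction with
  | base => norm_num
  | succ j hj ih =>
    have h1 : 9 * (j+1)^2 ≤ 2 * (9 * j^2) := by nlinarith
    calc 9 * (j+1)^2 ≤ 2 * (9 * j^2) := h1
      _ ≤ 2 * 2^j := by omega
      _ = 2^(j+1) := by ring

lemma keylem (n M e : ℕ) (hn : 1 ≤ n) (hM1 : 1 ≤ M)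
    (hm1 : M^2 ≤ 2*n) (hM2 : 2*n < (M+1)^2)
    (hlb : 2*n + 8 ≤ 3*e + 3*M) (hub : 3*e + 3*M ≤ 2*n + 12)
    (key : (2:ℕ)^e = n^(M-1)) : False := by
  rcases eq_or_lt_of_le hn with h1 | hn2
  · -- n = 1
    have hn1 : n = 1 := h1.symm
    subst hn1
    have hMe : M = 1 := by nlinarith
    rw [hMe] at key
    have he0 : (2:ℕ)^e = 2^0 := by simpa using key
    have := Nat.pow_right_injective (le_refl 2) he0
    omega
  · -- n ≥ 2
    have hM2' : 2 ≤ M := by nlinarith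
    have hdvd : n ∣ 2^e := by
      rw [key]
      exact dvd_pow_self n (by omega)
    obtain ⟨k, hke, hnk⟩ := (Nat.dvd_prime_pow Nat.prime_two).mp hdvd
    have hek : e = k * (M - 1) := by
      have h2 : (2:ℕ)^e = 2^(k*(M-1)) := by rw [key, hnk, pow_mul]
      exact Nat.pow_right_injective (le_refl 2) h2
    have hk1 : 1 ≤ k := by
      rcases Nat.eq_zero_or_pos k with h | h
      · subst h; simp at hnk; omega
      · exact h
    clear key hdvd hke hn hM1
    rcases le_or_gt k 8 with hk8 | hk9
    · -- small cases
      interval_cases k <;>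
      · norm_num at hnk
        subst hnk
        have hMub : M ≤ 22 := by nlinarith
        interval_cases M <;> omega
    · -- large k
      have h9 : 9 * (k+1)^2 ≤ 2^(k+1) := pow9 (k+1) (by omega)
      have h2n : 2*n = 2^(k+1) := by rw [hnk]; ring
      have h9Z : 9 * ((k:ℤ)+1)^2 ≤ 2*(n:ℤ) := by
        have h' : 9 * (k+1)^2 ≤ 2*n := by omega
        exact_mod_cast h'
      have hekZ : (e:ℤ) = (k:ℤ) * ((M:ℤ) - 1) := by
        rw [hek]
        push_cast [Nat.cast_sub (by omega : 1 ≤ M)] <;> ring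
      have hlbZ : 2*(n:ℤ) + 8 ≤ 3*(e:ℤ) + 3*(M:ℤ) := by exact_mod_cast hlb
      have hm1Z : (M:ℤ)^2 ≤ 2*(n:ℤ) := by exact_mod_cast hm1
      have hA : 3*((k:ℤ)+1)*(M:ℤ) ≤ 2*(n:ℤ) := by
        nlinarith [mul_le_mul h9Z hm1Z (sq_nonneg (M:ℤ)) (by positivity : (0:ℤ) ≤ 2*(n:ℤ)),
          sq_nonneg (3*((k:ℤ)+1) - (M:ℤ)), sq_nonneg (3*((k:ℤ)+1) + (M:ℤ))]
      have hk0 : (0:ℤ) ≤ (k:ℤ) := by positivity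
      linarith

theorem stmt
    (z : ℕ → ℤ) (m r : ℕ → ℕ) (c x : ℕ → ℤ) (y : ℕ → ℚ)
    (hz : ∀ n : ℕ, 1 ≤ n → 3 * z n < 2 * (n : ℤ) ∧ ∀ w : ℤ, 3 * w < 2 * (n : ℤ) → w ≤ z n)
    (hm : ∀ n : ℕ, 1 ≤ n → (m n : ℤ) ^ 2 ≤ 2 * (n : ℤ) ∧ ∀ w : ℕ, (w : ℤ) ^ 2 ≤ 2 * (n : ℤ) → w ≤ m n)
    (hr : ∀ n : ℕ, 1 ≤ n → n ≤ 2 ^ r n ∧ ∀ s : ℕ, n ≤ 2 ^ s → r n ≤ s)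
    (hc : ∀ n : ℕ, c n = 2 * (n : ℤ) - 2 * z n + 2)
    (hx : ∀ n : ℕ, x n = z n - ((r n : ℤ) + 1) * (m n : ℤ))
    (hy : ∀ n : ℕ, y n = (2 : ℚ) ^ (c n - (m n : ℤ)) - (n : ℚ) ^ ((m n : ℤ) - 1)) :
    ∀ n : ℕ, 1 ≤ n → y n ≠ 0 := by
  intro n hn hy0
  obtain ⟨hz1, hz2⟩ := hz n hn
  obtain ⟨hm1, hm2⟩ := hm n hn
  set M := m n with hMdef
  have hM1 : 1 ≤ M := hm2 1 (by push_cast <;> omega)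
  have hM2 : 2 * (n:ℤ) < ((M : ℤ) + 1)^2 := by
    by_contra h
    push_neg at h
    have := hm2 (M + 1) (by push_cast; push_cast at h; linarith)
    omega
  have hZub : 3 * z n ≤ 2*(n:ℤ) - 1 := by omega
  have hZlb : 2*(n:ℤ) ≤ 3 * z n + 3 := by
    by_contra h
    have := hz2 (z n + 1) (by omega)
    omega
  rw [hy n, sub_eq_zero] at hy0
  have hEc : c n - (M:ℤ) = 2*(n:ℤ) - 2*z n + 2 - M := by rw [hc]
  have hE1 : 1 ≤ c n - (M:ℤ) := by nlinarith [sq_nonneg ((M:ℤ) - 2)]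
  obtain ⟨e, he⟩ : ∃ e : ℕ, c n - (M:ℤ) = (e:ℤ) :=
    ⟨(c n - (M:ℤ)).toNat, (Int.toNat_of_nonneg (by omega)).symm⟩
  have hMc : (M:ℤ) - 1 = ((M - 1 : ℕ) : ℤ) := by omega
  rw [he, hMc, zpow_natCast, zpow_natCast] at hy0
  have key : (2:ℕ)^e = n^(M-1) := by exact_mod_cast hy0
  have hlb : 2*n + 8 ≤ 3*e + 3*M := by omega
  have hub : 3*e + 3*M ≤ 2*n + 12 := by omega
  have hm1' : M^2 ≤ 2*n := by exact_mod_cast hm1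
  have hM2' : 2*n < (M+1)^2 := by exact_mod_cast hM2
  exact keylem n M e hn hM1 hm1' hM2' hlb hub key
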